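/- With P₁ := Σ_{r=1}^{n₁} p_r, P₂ := Σ_{r=1}^{n₂} q_r, E₁ := Σ_{r=1}^{n₁} r·p_r, E₂ := Σ_{r=1}^{n₂} r·q_r, where p_r = C(N-r-1, n₁-r)(1/2)^{N-r} and q_r = C(N-r-1, n₂-r)(1/2)^{N-r}: E₁ + E₂ = (n₁ - n₂)(P₁ - P₂) + (N-1)·C(N-2, n₁-1)·(1/2)^{N-2}. -/

import Mathlib

open Finset

lemma key13 (n : ℕ) (hn : 0 < n) (m : ℕ) :
    ∑ s ∈ Finset.range m, (((n:ℝ) - s) * ((Nat.choose (n + s - 1) s : ℝ) * (1/2) ^ (n + s)))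
    = (m:ℝ) * (Nat.choose (n + m - 1) m : ℝ) * (1/2) ^ (n + m - 1) := by
  induction m with
  | zero => simp
  | succ m ih =>
    rw [Finset.sum_range_succ, ih]
    have h : n + m - 1 + 1 = n + m := by omega
    have h2 : n + (m+1) - 1 = n + m := by omega
    have hc : (n + m) * Nat.choose (n+m-1) m = Nat.choose (n+m) (m+1) * (m+1) := by
      have := Nat.add_one_mul_choose_eq (n+m-1) m
      rwa [h] at this
    have hcR : ((n:ℝ) + m) * (Nat.choose (n+m-1) m : ℝ)
        = (Nat.choose (n+m) (m+1) : ℝ) * (m+1) := by exact_mod_cast hc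
    have hp : (1/2:ℝ)^(n+m) = (1/2)^(n+m-1) * (1/2) := by rw [← pow_succ, h]
    rw [h2, hp]
    push_cast
    linear_combination ((1/2:ℝ)^(n+m-1) * (1/2)) * hcR

lemma reindex13 (a b : ℕ) (ha : 0 < a) (hb : 0 < b) :
    ∑ r ∈ Finset.Icc 1 a, (((r:ℝ) - ((a:ℝ) - b)) *
        ((Nat.choose (a + b - r - 1) (a - r) : ℝ) * (1/2) ^ (a + b - r)))
    = (a:ℝ) * (Nat.choose (a + b - 1) a : ℝ) * (1/2) ^ (a + b - 1) := by
  rw [show a + b - 1 = b + a - 1 by omega, ← key13 b hb a]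
  refine Finset.sum_nbij' (fun r => a - r) (fun s => a - s) ?_ ?_ ?_ ?_ ?_
  · intro r hr; simp only [Finset.mem_Icc] at hr; simp only [Finset.mem_range]; omega
  · intro s hs; simp only [Finset.mem_range] at hs; simp only [Finset.mem_Icc]; omega
  · intro r hr; simp only [Finset.mem_Icc] at hr; show a - (a - r) = r; omega
  · intro s hs; simp only [Finset.mem_range] at hs; show a - (a - s) = s; omega
  · intro r hr
    simp only [Finset.mem_Icc] at hr
    show ((r:ℝ) - ((a:ℝ) - b)) * _ = ((b:ℝ) - (a - r : ℕ)) * _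
    have e1 : b + (a - r) - 1 = a + b - r - 1 := by omega
    have e2 : b + (a - r) = a + b - r := by omega
    have e3 : ((a - r : ℕ) : ℝ) = (a:ℝ) - r := by
      have : r ≤ a := hr.2
      push_cast [this]; ring
    rw [e1, e2, e3]
    ring

theorem stmt13 (n₁ n₂ : ℕ) (h₁ : 0 < n₁) (h₂ : 0 < n₂) :
    (∑ r ∈ Finset.Icc 1 n₁, (r : ℝ) *
        ((Nat.choose (n₁ + n₂ - r - 1) (n₁ - r) : ℝ) * (1 / 2) ^ (n₁ + n₂ - r)))
    + (∑ r ∈ Finset.Icc 1 n₂, (r : ℝ) *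
        ((Nat.choose (n₁ + n₂ - r - 1) (n₂ - r) : ℝ) * (1 / 2) ^ (n₁ + n₂ - r)))
    = ((n₁ : ℝ) - n₂) *
        ((∑ r ∈ Finset.Icc 1 n₁,
            (Nat.choose (n₁ + n₂ - r - 1) (n₁ - r) : ℝ) * (1 / 2) ^ (n₁ + n₂ - r))
         - (∑ r ∈ Finset.Icc 1 n₂,
            (Nat.choose (n₁ + n₂ - r - 1) (n₂ - r) : ℝ) * (1 / 2) ^ (n₁ + n₂ - r)))
      + ((n₁ : ℝ) + n₂ - 1) * (Nat.choose (n₁ + n₂ - 2) (n₁ - 1) : ℝ) *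
          (1 / 2) ^ (n₁ + n₂ - 2) := by
  have h1 := reindex13 n₁ n₂ h₁ h₂
  have h2 := reindex13 n₂ n₁ h₂ h₁
  simp only [Nat.add_comm n₂ n₁] at h2
  have split1 : ∑ r ∈ Finset.Icc 1 n₁, (((r:ℝ) - ((n₁:ℝ) - n₂)) *
        ((Nat.choose (n₁ + n₂ - r - 1) (n₁ - r) : ℝ) * (1/2) ^ (n₁ + n₂ - r)))
      = (∑ r ∈ Finset.Icc 1 n₁, (r:ℝ) *
          ((Nat.choose (n₁ + n₂ - r - 1) (n₁ - r) : ℝ) * (1/2) ^ (n₁ + n₂ - r)))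
        - ((n₁:ℝ) - n₂) * ∑ r ∈ Finset.Icc 1 n₁,
            ((Nat.choose (n₁ + n₂ - r - 1) (n₁ - r) : ℝ) * (1/2) ^ (n₁ + n₂ - r)) := by
    rw [Finset.mul_sum, ← Finset.sum_sub_distrib]
    exact Finset.sum_congr rfl fun x _ => by ring
  have split2 : ∑ r ∈ Finset.Icc 1 n₂, (((r:ℝ) - ((n₂:ℝ) - n₁)) *
        ((Nat.choose (n₁ + n₂ - r - 1) (n₂ - r) : ℝ) * (1/2) ^ (n₁ + n₂ - r)))
      = (∑ r ∈ Finset.Icc 1 n₂, (r:ℝ) *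
          ((Nat.choose (n₁ + n₂ - r - 1) (n₂ - r) : ℝ) * (1/2) ^ (n₁ + n₂ - r)))
        - ((n₂:ℝ) - n₁) * ∑ r ∈ Finset.Icc 1 n₂,
            ((Nat.choose (n₁ + n₂ - r - 1) (n₂ - r) : ℝ) * (1/2) ^ (n₁ + n₂ - r)) := by
    rw [Finset.mul_sum, ← Finset.sum_sub_distrib]
    exact Finset.sum_congr rfl fun x _ => by ring
  have hA : (n₁ + n₂ - 1) * Nat.choose (n₁+n₂-2) (n₁-1) = Nat.choose (n₁+n₂-1) n₁ * n₁ := by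
    have := Nat.add_one_mul_choose_eq (n₁+n₂-2) (n₁-1)
    rwa [show n₁+n₂-2+1 = n₁+n₂-1 by omega, show n₁-1+1 = n₁ by omega] at this
  have hS : Nat.choose (n₁+n₂-2) (n₂-1) = Nat.choose (n₁+n₂-2) (n₁-1) := by
    rw [show n₂ - 1 = (n₁+n₂-2) - (n₁-1) by omega]
    exact Nat.choose_symm (by omega)
  have hB : (n₁ + n₂ - 1) * Nat.choose (n₁+n₂-2) (n₁-1) = Nat.choose (n₁+n₂-1) n₂ * n₂ := by
    rw [← hS]
    have := Nat.add_one_mul_choose_eq (n₁+n₂-2) (n₂-1)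
    rwa [show n₁+n₂-2+1 = n₁+n₂-1 by omega, show n₂-1+1 = n₂ by omega] at this
  have hcast : ((n₁+n₂-1 : ℕ) : ℝ) = (n₁:ℝ) + n₂ - 1 := by
    push_cast [show 1 ≤ n₁+n₂ by omega]; ring
  have hAR : ((n₁:ℝ) + n₂ - 1) * (Nat.choose (n₁+n₂-2) (n₁-1) : ℝ)
      = (Nat.choose (n₁+n₂-1) n₁ : ℝ) * n₁ := by
    rw [← hcast]; exact_mod_cast congrArg (Nat.cast : ℕ → ℝ) hA
  have hBR : ((n₁:ℝ) + n₂ - 1) * (Nat.choose (n₁+n₂-2) (n₁-1) : ℝ)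
      = (Nat.choose (n₁+n₂-1) n₂ : ℝ) * n₂ := by
    rw [← hcast]; exact_mod_cast congrArg (Nat.cast : ℕ → ℝ) hB
  have hp : (1/2:ℝ)^(n₁+n₂-1) = (1/2)^(n₁+n₂-2) * (1/2) := by
    rw [← pow_succ, show n₁+n₂-2+1 = n₁+n₂-1 by omega]
  rw [hp] at h1 h2
  linear_combination h1 - split1 + h2 - split2 - (1/2 * (1/2:ℝ)^(n₁+n₂-2)) * hAR
    - (1/2 * (1/2:ℝ)^(n₁+n₂-2)) * hBR
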